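/- Let ς = (s₁,...,s_p) ∈ ℤ_{>0}^p with n = s₁+···+s_p > s ≥ 0, s ≡ n (mod 2). If v ∈ M_{d_p} ⊗ ··· ⊗ M_{d_1} (d_i = s_i+1) satisfies E.v = 0, K.v = q^s v, and all generalized projections π̃_j^(δ)(v) = 0 for every j ∈ {1,...,p-1}, every m ∈ {1,...,min(s_j,s_{j+1})}, and δ = s_j+s_{j+1}+1-2m, then v = 0. -/

import Mathlib

noncomputable section
open Finset

/-- `q` is a nonzero complex number that is not a root of unity. -/
def NotRootOfUnity (q : ℂ) : Prop := q ≠ 0 ∧ ∀ m : ℤ, m ≠ 0 → q ^ m ≠ 1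

/-- The q-integer `[m]_q = (q^m - q^(-m))/(q - q⁻¹)`. -/
def qint (q : ℂ) (m : ℤ) : ℂ := (q ^ m - q ^ (-m)) / (q - q⁻¹)

/-- Coefficient model of the tensor product `M_{d_p} ⊗ ⋯ ⊗ M_{d_1}` of irreducible
`U_q(sl₂)`-modules: a vector is the coefficient function of the basis
`e_{l(0)} ⊗ ⋯ ⊗ e_{l(p-1)}` (the index `i : Fin p` labels the `i`-th tensorand from the
left, which is the irreducible of dimension `d i`). -/
abbrev VG (p : ℕ) (d : Fin p → ℕ) := ((i : Fin p) → Fin (d i)) → ℂ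

/-- Action of `E` via `Δ^(p)(E) = ∑ᵢ 1^{⊗(i-1)} ⊗ E ⊗ K^{⊗(p-i)}` (the first coproduct
leg acts on the leftmost tensorand; in `M_d`: `E.e_l = [l]_q [d-l]_q e_{l-1}`,
`K.e_l = q^{d-1-2l} e_l`). -/
def EactG (q : ℂ) (p : ℕ) (d : Fin p → ℕ) (v : VG p d) : VG p d :=
  fun m => ∑ i : Fin p,
    (∏ j : Fin p, if i < j then q ^ (((d j : ℤ) - 1) - 2 * (m j : ℤ)) else 1) *
      qint q ((m i : ℤ) + 1) * qint q (((d i : ℤ) - 1) - (m i : ℤ)) *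
      (if h : (m i : ℕ) + 1 < d i then v (Function.update m i ⟨(m i : ℕ) + 1, h⟩) else 0)

/-- Action of `F` via `Δ^(p)(F) = ∑ᵢ (K⁻¹)^{⊗(i-1)} ⊗ F ⊗ 1^{⊗(p-i)}`
(in `M_d`: `F.e_l = e_{l+1}`, `F.e_{d-1} = 0`). -/
def FactG (q : ℂ) (p : ℕ) (d : Fin p → ℕ) (v : VG p d) : VG p d :=
  fun m => ∑ i : Fin p,
    (∏ j : Fin p, if j < i then q ^ (2 * (m j : ℤ) - ((d j : ℤ) - 1)) else 1) *
      (if h : 0 < (m i : ℕ) then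
        v (Function.update m i ⟨(m i : ℕ) - 1, by have := (m i).isLt; omega⟩) else 0)

/-- Action of `K` (diagonal). -/
def KactG (q : ℂ) (p : ℕ) (d : Fin p → ℕ) (v : VG p d) : VG p d :=
  fun m => (∏ j : Fin p, q ^ (((d j : ℤ) - 1) - 2 * (m j : ℤ))) * v m

/-- The vector `e₀ ⊗ ⋯ ⊗ e₀`. -/
def e0G (p : ℕ) (d : Fin p → ℕ) : VG p d := fun m => if ∀ i, (m i : ℕ) = 0 then 1 else 0

/-- Action of `F` on the coefficient model of a two-fold tensor product
`M_{dL} ⊗ M_{dR}` (first coproduct leg on the left tensorand). -/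
def FactP (q : ℂ) (dL dR : ℕ) (v : Fin dL × Fin dR → ℂ) : Fin dL × Fin dR → ℂ :=
  fun x =>
    (if h : 0 < (x.1 : ℕ) then
        v (⟨(x.1 : ℕ) - 1, by have := x.1.isLt; omega⟩, x.2) else 0)
      + q ^ (2 * (x.1 : ℤ) - ((dL : ℤ) - 1)) *
        (if h : 0 < (x.2 : ℕ) then
          v (x.1, ⟨(x.2 : ℕ) - 1, by have := x.2.isLt; omega⟩) else 0)

/-- The highest weight vector `e₀ ⊗ e₀` of `M_{dL} ⊗ M_{dR}`. -/
def e0P (dL dR : ℕ) : Fin dL × Fin dR → ℂ :=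
  fun x => if (x.1 : ℕ) = 0 ∧ (x.2 : ℕ) = 0 then 1 else 0

/-- The basis `F^t.(e₀ ⊗ e₀)` of the top Clebsch–Gordan summand
`M_{dL+dR-1} ⊂ M_{dL} ⊗ M_{dR}`. -/
def thetaP (q : ℂ) (dL dR t : ℕ) : Fin dL × Fin dR → ℂ := (FactP q dL dR)^[t] (e0P dL dR)

/-- Embed a vector `w` of the pair of tensorands at positions `j`, `j₁` into the full
tensor product, the remaining tensor positions being filled with the basis vectors
prescribed by `g`. -/
def embedPair (p : ℕ) (d : Fin p → ℕ) (j j₁ : Fin p)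
    (g : (i : Fin p) → Fin (d i)) (w : Fin (d j) × Fin (d j₁) → ℂ) : VG p d :=
  fun m => (if ∀ i, i ≠ j → i ≠ j₁ → m i = g i then 1 else 0) * w (m j, m j₁)

/-- The subspace of the tensor product consisting of vectors whose component in every
non-top Clebsch–Gordan summand of the adjacent pair of tensorands at positions
`j`, `j+1` vanishes, i.e. the subspace
`(⋯) ⊗ M_{d_j+d_{j+1}-1} ⊗ (⋯)`: the span of vectors carrying an element of the top
summand (spanned by the `F`-iterates of `e₀ ⊗ e₀`) in positions `j`, `j+1` and basis
vectors elsewhere.  Equivalently: all generalized projections `π̃_j^(δ)` with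
`δ = s_j + s_{j+1} + 1 - 2m`, `m ≥ 1`, annihilate the vector. -/
def TopPairCG (q : ℂ) (p : ℕ) (d : Fin p → ℕ) (j : ℕ) (hj : j + 1 < p) :
    Submodule ℂ (VG p d) :=
  Submodule.span ℂ
    {v | ∃ (g : (i : Fin p) → Fin (d i)) (t : ℕ),
      v = embedPair p d ⟨j, by omega⟩ ⟨j + 1, hj⟩ g
            (thetaP q (d ⟨j, by omega⟩) (d ⟨j + 1, hj⟩) t)}


namespace HW

variable {q : ℂ}

/-- geometric series in `q²`. -/
def G (q : ℂ) (n : ℕ) : ℂ := ∑ i ∈ Finset.range n, (q^2)^i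

lemma pow_ne_one (hq : NotRootOfUnity q) {k : ℕ} (hk : k ≠ 0) : q ^ k ≠ 1 := by
  have := hq.2 k (by exact_mod_cast hk)
  simpa [zpow_natCast] using this

lemma sq_sub_one_ne (hq : NotRootOfUnity q) : q^2 - 1 ≠ 0 := by
  have := pow_ne_one hq (k := 2) (by norm_num)
  intro h; apply this; linear_combination h

lemma G_mul (hq : NotRootOfUnity q) (n : ℕ) : G q n * (q^2 - 1) = q^(2*n) - 1 := by
  have := geom_sum_mul (q^2) n
  simpa [G, pow_mul] using this

lemma G_ne_zero (hq : NotRootOfUnity q) {n : ℕ} (hn : n ≠ 0) : G q n ≠ 0 := by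
  intro h
  have h2 := G_mul hq n
  rw [h, zero_mul] at h2
  have : q ^ (2*n) ≠ 1 := pow_ne_one hq (by omega)
  apply this; linear_combination -h2

lemma G_add (a b : ℕ) : G q (a + b) = G q a + q^(2*a) * G q b := by
  induction b with
  | zero => simp [G]
  | succ b ih =>
      have : a + (b+1) = (a+b) + 1 := by omega
      rw [this]
      simp only [G, Finset.sum_range_succ] at *
      rw [ih]; ring_nf

/-- q²-factorial. -/
def Qf (q : ℂ) (n : ℕ) : ℂ := ∏ k ∈ Finset.range n, G q (k+1)

@[simp] lemma Qf_zero : Qf q 0 = 1 := by simp [Qf]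

lemma Qf_succ (n : ℕ) : Qf q (n+1) = Qf q n * G q (n+1) := Finset.prod_range_succ _ _

lemma Qf_ne_zero (hq : NotRootOfUnity q) (n : ℕ) : Qf q n ≠ 0 := by
  apply Finset.prod_ne_zero_iff.mpr
  intro k _; exact G_ne_zero hq (by omega)

lemma q_sub_inv_ne (hq : NotRootOfUnity q) : q - q⁻¹ ≠ 0 := by
  intro h
  have hq0 := hq.1
  apply sq_sub_one_ne hq
  have : (q - q⁻¹) * q = q^2 - 1 := by field_simp
  rw [h, zero_mul] at this; exact this.symm

lemma qint_nat (hq : NotRootOfUnity q) (a : ℕ) : qint q a = q ^ (1 - (a:ℤ)) * G q a := by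
  have hq0 := hq.1
  rw [qint, div_eq_iff (q_sub_inv_ne hq)]
  have h1 : q ^ (1 - (a:ℤ)) * G q a * (q - q⁻¹) = q ^ (-(a:ℤ)) * (G q a * (q^2 - 1)) := by
    rw [show (1 : ℤ) - a = -a + 1 by ring, zpow_add₀ hq0, zpow_one]
    field_simp
  rw [h1, G_mul hq]
  rw [mul_sub, mul_one, ← zpow_natCast q (2*a), ← zpow_add₀ hq0]
  congr 1
  · congr 1; push_cast; ring

section Upd
variable {p : ℕ} {β : Fin p → Type*}

lemma prod_update_one (f : (i : Fin p) → β i → ℂ) (m : ∀ i, β i) (J : Fin p) (a' : β J) :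
    (∏ i, f i (Function.update m J a' i)) * f J (m J) = (∏ i, f i (m i)) * f J a' := by
  have h1 : ∏ i, f i (Function.update m J a' i)
      = ∏ i, Function.update (fun k => f k (m k)) J (f J a') i := by
    refine Finset.prod_congr rfl fun i _ => ?_
    rw [Function.apply_update (fun k => f k) m J a' i]
  rw [h1, Finset.prod_update_of_mem (Finset.mem_univ J), Finset.sdiff_singleton_eq_erase,
    ← Finset.mul_prod_erase Finset.univ (fun k => f k (m k)) (Finset.mem_univ J)]
  ring

lemma prod_update_pair (f : (i : Fin p) → β i → ℂ) (m : ∀ i, β i) (J J1 : Fin p)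
    (h : J1 ≠ J) (a' : β J) (b' : β J1) :
    (∏ i, f i (Function.update (Function.update m J a') J1 b' i)) *
      (f J (m J) * f J1 (m J1))
    = (∏ i, f i (m i)) * (f J a' * f J1 b') := by
  have e1 := prod_update_one f (Function.update m J a') J1 b'
  have e2 := prod_update_one f m J a'
  rw [Function.update_of_ne h] at e1
  linear_combination f J (m J) * e1 + f J1 b' * e2

lemma sum_update_one (f : (i : Fin p) → β i → ℕ) (m : ∀ i, β i) (J : Fin p) (a' : β J) :
    (∑ i, f i (Function.update m J a' i)) + f J (m J) = (∑ i, f i (m i)) + f J a' := by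
  have h1 : ∑ i, f i (Function.update m J a' i)
      = ∑ i, Function.update (fun k => f k (m k)) J (f J a') i := by
    refine Finset.sum_congr rfl fun i _ => ?_
    rw [Function.apply_update (fun k => f k) m J a' i]
  rw [h1, Finset.sum_update_of_mem (Finset.mem_univ J), Finset.sdiff_singleton_eq_erase,
    ← Finset.add_sum_erase Finset.univ (fun k => f k (m k)) (Finset.mem_univ J)]
  omega

lemma sum_update_pair (f : (i : Fin p) → β i → ℕ) (m : ∀ i, β i) (J J1 : Fin p)
    (h : J1 ≠ J) (a' : β J) (b' : β J1) :
    (∑ i, f i (Function.update (Function.update m J a') J1 b' i)) +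
      (f J (m J) + f J1 (m J1))
    = (∑ i, f i (m i)) + (f J a' + f J1 b') := by
  have e1 := sum_update_one f (Function.update m J a') J1 b'
  have e2 := sum_update_one f m J a'
  rw [Function.update_of_ne h] at e1
  omega

end Upd

lemma prod_zpow_sum (hq0 : q ≠ 0) {α : Type*} (s : Finset α) (f : α → ℤ) :
    ∏ x ∈ s, q ^ f x = q ^ (∑ x ∈ s, f x) := by
  classical
  induction s using Finset.cons_induction with
  | empty => simp
  | cons a s ha ih => rw [Finset.prod_cons, Finset.sum_cons, ih, ← zpow_add₀ hq0]

lemma filter_range_lt (i p : ℕ) (h : i ≤ p) :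
    (Finset.range p).filter (fun k => k < i) = Finset.range i := by
  ext k; simp only [Finset.mem_filter, Finset.mem_range]; omega

lemma sum_ite_range {M : Type*} [AddCommMonoid M] (i p : ℕ) (h : i ≤ p) (f : ℕ → M) :
    ∑ k ∈ Finset.range p, (if k < i then f k else 0) = ∑ k ∈ Finset.range i, f k := by
  rw [← Finset.sum_filter, filter_range_lt i p h]

/-- ℕ-indexed weights. -/
def eN (p : ℕ) (d : Fin p → ℕ) : ℕ → ℤ :=
  fun k => if h : k < p then (d ⟨k, h⟩ : ℤ) - 1 else 0

def wN (p : ℕ) (d : Fin p → ℕ) (m : (i : Fin p) → Fin (d i)) : ℕ → ℤ :=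
  fun k => if h : k < p then ((d ⟨k, h⟩ : ℤ) - 1 - 2 * ((m ⟨k, h⟩ : ℕ) : ℤ)) else 0

def CC (p : ℕ) (d : Fin p → ℕ) (m : (i : Fin p) → Fin (d i)) : ℕ → ℤ :=
  fun k => (∑ j ∈ Finset.range p, wN p d m j) - ∑ j ∈ Finset.range k, (wN p d m j + eN p d j)

lemma eN_at {p : ℕ} (d : Fin p → ℕ) (i : Fin p) : eN p d (i:ℕ) = (d i : ℤ) - 1 := by
  simp [eN, i.isLt]

lemma wN_at {p : ℕ} (d : Fin p → ℕ) (m : (i : Fin p) → Fin (d i)) (i : Fin p) :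
    wN p d m (i:ℕ) = (d i : ℤ) - 1 - 2 * ((m i : ℕ) : ℤ) := by
  simp [wN, i.isLt]

/-- closed-form coefficient of the top-summand basis vectors in a pair. -/
def Cp (q : ℂ) (dL : ℕ) (a b : ℕ) : ℂ :=
  q ^ (-(b:ℤ) * ((dL:ℤ) - 1)) * (Qf q (a+b) / (Qf q a * Qf q b))

lemma Cp_ne_zero (hq : NotRootOfUnity q) (dL a b : ℕ) : Cp q dL a b ≠ 0 := by
  apply mul_ne_zero (zpow_ne_zero _ hq.1)
  exact div_ne_zero (Qf_ne_zero hq _) (mul_ne_zero (Qf_ne_zero hq _) (Qf_ne_zero hq _))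

lemma Cp_zero_left (hq : NotRootOfUnity q) (dL b : ℕ) :
    Cp q dL 0 b = q ^ (-(b:ℤ) * ((dL:ℤ) - 1)) := by
  rw [Cp, Qf_zero]
  rw [zero_add, one_mul, div_self (Qf_ne_zero hq _), mul_one]

lemma Cp_zero_right (hq : NotRootOfUnity q) (dL a : ℕ) : Cp q dL a 0 = 1 := by
  rw [Cp, Qf_zero]
  simp [div_self (Qf_ne_zero hq a)]

lemma frac_pascal (X A B Ga Gb P : ℂ) (hA : A ≠ 0) (hB : B ≠ 0) (hGa : Ga ≠ 0) (hGb : Gb ≠ 0) :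
    X * (Ga + P * Gb) / ((A * Ga) * (B * Gb)) = X / (A * (B * Gb)) + P * (X / ((A * Ga) * B)) := by
  field_simp

lemma Cp_pascal (hq : NotRootOfUnity q) (dL : ℕ) (a b : ℕ) :
    Cp q dL (a+1) (b+1) =
      Cp q dL a (b+1) + q ^ (2*((a:ℤ)+1) - ((dL:ℤ)-1)) * Cp q dL (a+1) b := by
  have hq0 : q ≠ 0 := hq.1
  set e : ℤ := (dL:ℤ) - 1 with he
  have h1 : q ^ (-(((b:ℤ))+1) * e) = q ^ (-(b:ℤ)*e) * q^(-e) := by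
    rw [← zpow_add₀ hq0]; congr 1; ring
  have h2 : q ^ (2*((a:ℤ)+1) - e) = (q^2)^((a+1 : ℕ)) * q^(-e) := by
    rw [← zpow_natCast (q^2) (a+1), ← zpow_natCast q 2, ← zpow_mul, ← zpow_add₀ hq0]
    congr 1 <;> (push_cast; try ring)
  have expand : ∀ x y : ℕ, Cp q dL x y = q ^ (-(y:ℤ) * e) * (Qf q (x+y) / (Qf q x * Qf q y)) := by
    intro x y; rfl
  rw [expand, expand, expand]
  push_cast
  rw [h1, h2]
  have e1 : (a:ℕ)+1+(b+1) = ((a+b+1)+1) := by omega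
  have e2 : (a:ℕ)+(b+1) = (a+b+1) := by omega
  have e3 : (a:ℕ)+1+b = (a+b+1) := by omega
  rw [e1, e2, e3, Qf_succ (a+b+1), Qf_succ a, Qf_succ b]
  have hGab : G q ((a+b+1)+1) = G q (a+1) + (q^2)^((a+1:ℕ)) * G q (b+1) := by
    rw [show (a+b+1)+1 = (a+1)+(b+1) by omega, G_add]
    congr 2; rw [← pow_mul]
  rw [hGab]
  have n1 := Qf_ne_zero hq a
  have n2 := Qf_ne_zero hq b
  have n4 := G_ne_zero hq (n := a+1) (by omega)
  have n5 := G_ne_zero hq (n := b+1) (by omega)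
  have key := frac_pascal (Qf q (a+b+1)) (Qf q a) (Qf q b) (G q (a+1)) (G q (b+1))
    ((q^2)^(a+1)) n1 n2 n4 n5
  linear_combination (q ^ (-(b:ℤ)*e) * q^(-e)) * key

lemma thetaP_eq (hq : NotRootOfUnity q) (dL dR t : ℕ) (x : Fin dL × Fin dR) :
    thetaP q dL dR t x = if (x.1:ℕ) + (x.2:ℕ) = t then Cp q dL x.1 x.2 else 0 := by
  induction t generalizing x with
  | zero =>
      rw [thetaP, Function.iterate_zero_apply, e0P]
      by_cases h : (x.1:ℕ) = 0 ∧ (x.2:ℕ) = 0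
      · rw [if_pos h, if_pos (by omega), h.1, h.2, Cp_zero_right hq]
      · rw [if_neg h, if_neg (by omega)]
  | succ t ih =>
      rw [thetaP, Function.iterate_succ_apply']
      rw [show (FactP q dL dR)^[t] (e0P dL dR) = thetaP q dL dR t from rfl]
      rw [FactP]
      rcases Nat.eq_zero_or_pos (x.1:ℕ) with ha | ha
      · rcases Nat.eq_zero_or_pos (x.2:ℕ) with hb | hb
        · rw [dif_neg (by omega), dif_neg (by omega), if_neg (by omega)]; ring
        · obtain ⟨b', hb'⟩ : ∃ b', (x.2:ℕ) = b' + 1 := ⟨(x.2:ℕ)-1, by omega⟩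
          rw [dif_neg (by omega), dif_pos hb, ih]
          simp only [ha, hb', Nat.add_sub_cancel]
          by_cases hc : b' + 1 = t + 1
          · have hcc : b' = t := by omega
            subst hcc
            rw [if_pos (by omega), if_pos (by omega)]
            rw [Cp_zero_left hq, Cp_zero_left hq]
            rw [zero_add, ← zpow_add₀ hq.1]
            congr 1; push_cast; ring
          · rw [if_neg (by omega), if_neg (by omega)]; ring
      · rcases Nat.eq_zero_or_pos (x.2:ℕ) with hb | hb
        · obtain ⟨a', ha'⟩ : ∃ a', (x.1:ℕ) = a' + 1 := ⟨(x.1:ℕ)-1, by omega⟩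
          rw [dif_pos ha, dif_neg (by omega), ih]
          simp only [ha', hb, Nat.add_sub_cancel]
          by_cases hc : a' + 1 = t + 1
          · rw [if_pos (by omega), if_pos (by omega)]
            rw [Cp_zero_right hq, Cp_zero_right hq]; ring
          · rw [if_neg (by omega), if_neg (by omega)]; ring
        · obtain ⟨a', ha'⟩ : ∃ a', (x.1:ℕ) = a' + 1 := ⟨(x.1:ℕ)-1, by omega⟩
          obtain ⟨b', hb'⟩ : ∃ b', (x.2:ℕ) = b' + 1 := ⟨(x.2:ℕ)-1, by omega⟩
          rw [dif_pos ha, dif_pos hb, ih, ih]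
          simp only [ha', hb', Nat.add_sub_cancel]
          by_cases hc : a' + 1 + (b' + 1) = t + 1
          · rw [if_pos (by omega), if_pos (by omega), if_pos (by omega)]
            rw [Cp_pascal hq]
            push_cast
            ring
          · rw [if_neg (by omega), if_neg (by omega), if_neg (by omega)]; ring


/-- partial sum of weights to the left of `i`. -/
def Nlt {p : ℕ} (d : Fin p → ℕ) (i : Fin p) : ℤ :=
  ∑ k ∈ Finset.range (i:ℕ), eN p d k

/-- the global reference vector: closed form for `F^(Σm).(e₀⊗⋯⊗e₀)` coefficients. -/
def Th (q : ℂ) {p : ℕ} (d : Fin p → ℕ) (m : (i : Fin p) → Fin (d i)) : ℂ :=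
  (∏ i, q ^ (-((m i : ℕ) : ℤ) * Nlt d i)) *
    (Qf q (∑ i, ((m i : ℕ))) / (∏ i, Qf q (m i : ℕ)))

lemma Th_ne_zero (hq : NotRootOfUnity q) {p : ℕ} (d : Fin p → ℕ) (m : (i : Fin p) → Fin (d i)) :
    Th q d m ≠ 0 := by
  apply mul_ne_zero
  · exact Finset.prod_ne_zero_iff.mpr fun i _ => zpow_ne_zero _ hq.1
  · exact div_ne_zero (Qf_ne_zero hq _)
      (Finset.prod_ne_zero_iff.mpr fun i _ => Qf_ne_zero hq _)

lemma Nlt_succ {p : ℕ} (d : Fin p → ℕ) (J J1 : Fin p) (h : (J1:ℕ) = (J:ℕ) + 1) :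
    Nlt d J1 = Nlt d J + ((d J : ℤ) - 1) := by
  rw [Nlt, Nlt, h, Finset.sum_range_succ, eN_at]

lemma swap_helper (S T A A' Qp Q' u w x y x' y' : ℂ) (hQp : Qp ≠ 0) (hQ' : Q' ≠ 0)
    (hx : x ≠ 0) (hy : y ≠ 0) (hx' : x' ≠ 0) (hy' : y' ≠ 0)
    (hz : A * u = A' * w) (hqq : Q' * (x * y) = Qp * (x' * y')) :
    (A * (S / Qp)) * (u * (T / (x' * y'))) = (A' * (S / Q')) * (w * (T / (x * y))) := by
  have e1 : (A * (S / Qp)) * (u * (T / (x' * y'))) = (A*u) * (S*T) / (Qp * (x'*y')) := by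
    ring
  have e2 : (A' * (S / Q')) * (w * (T / (x * y))) = (A'*w) * (S*T) / (Q' * (x*y)) := by
    ring
  rw [e1, e2, hz, div_eq_div_iff (mul_ne_zero hQp (mul_ne_zero hx' hy'))
    (mul_ne_zero hQ' (mul_ne_zero hx hy))]
  linear_combination (A' * w * S * T) * hqq

/-- the key exchange relation for `Th` along an adjacent pair. -/
lemma Th_pair (hq : NotRootOfUnity q) {p : ℕ} (d : Fin p → ℕ)
    (J J1 : Fin p) (hJ : (J1:ℕ) = (J:ℕ) + 1)
    (m : (i : Fin p) → Fin (d i)) (a' : Fin (d J)) (b' : Fin (d J1))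
    (hsum : (a':ℕ) + (b':ℕ) = (m J : ℕ) + (m J1 : ℕ)) :
    Th q d m * Cp q (d J) (a':ℕ) (b':ℕ)
      = Th q d (Function.update (Function.update m J a') J1 b')
          * Cp q (d J) (m J : ℕ) (m J1 : ℕ) := by
  have hq0 : q ≠ 0 := hq.1
  have hne : J1 ≠ J := by
    intro h; rw [h] at hJ; omega
  have hS : (∑ i, ((Function.update (Function.update m J a') J1 b' i : ℕ)))
      = ∑ i, ((m i : ℕ)) := by
    have := sum_update_pair (fun i (x : Fin (d i)) => (x:ℕ)) m J J1 hne a' b'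
    omega
  have hq2 := prod_update_pair (fun i (x : Fin (d i)) => Qf q (x:ℕ)) m J J1 hne a' b'
  have key1 := prod_update_pair (fun i (x : Fin (d i)) => q ^ (-((x:ℕ):ℤ) * Nlt d i))
    m J J1 hne a' b'
  have hN1 : Nlt d J1 = Nlt d J + ((d J : ℤ) - 1) := Nlt_succ d J J1 hJ
  have hsz : ((a':ℕ):ℤ) + ((b':ℕ):ℤ) = ((m J:ℕ):ℤ) + ((m J1:ℕ):ℤ) := by exact_mod_cast hsum
  have hzc : q ^ (-((b':ℕ):ℤ) * ((d J:ℤ)-1)) *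
      (q ^ (-((m J:ℕ):ℤ) * Nlt d J) * q ^ (-((m J1:ℕ):ℤ) * Nlt d J1))
      = q ^ (-((m J1:ℕ):ℤ) * ((d J:ℤ)-1)) *
      (q ^ (-((a':ℕ):ℤ) * Nlt d J) * q ^ (-((b':ℕ):ℤ) * Nlt d J1)) := by
    rw [← zpow_add₀ hq0, ← zpow_add₀ hq0, ← zpow_add₀ hq0, ← zpow_add₀ hq0]
    congr 1
    rw [hN1]
    linear_combination (Nlt d J) * hsz
  have hz : (∏ i, q ^ (-((m i:ℕ):ℤ) * Nlt d i)) * q ^ (-((b':ℕ):ℤ) * ((d J:ℤ)-1))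
      = (∏ i, q ^ (-((Function.update (Function.update m J a') J1 b' i :ℕ):ℤ) * Nlt d i))
          * q ^ (-((m J1:ℕ):ℤ) * ((d J:ℤ)-1)) := by
    have hXne : q ^ (-((m J:ℕ):ℤ) * Nlt d J) * q ^ (-((m J1:ℕ):ℤ) * Nlt d J1) ≠ 0 :=
      mul_ne_zero (zpow_ne_zero _ hq0) (zpow_ne_zero _ hq0)
    apply mul_right_cancel₀ hXne
    linear_combination (- q ^ (-((m J1:ℕ):ℤ) * ((d J:ℤ)-1))) * key1 +
      (∏ i, q ^ (-((m i:ℕ):ℤ) * Nlt d i)) * hzc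
  rw [Th, Th, Cp, Cp, hS, hsum]
  exact swap_helper _ _ _ _ _ _ _ _ _ _ _ _
    (Finset.prod_ne_zero_iff.mpr fun i _ => Qf_ne_zero hq _)
    (Finset.prod_ne_zero_iff.mpr fun i _ => Qf_ne_zero hq _)
    (Qf_ne_zero hq _) (Qf_ne_zero hq _) (Qf_ne_zero hq _) (Qf_ne_zero hq _)
    hz hq2


lemma top_rel (hq : NotRootOfUnity q) {p : ℕ} (d : Fin p → ℕ) (v : VG p d)
    (j : ℕ) (hj : j + 1 < p) (hj1 : j < p) (hv : v ∈ TopPairCG q p d j hj)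
    (m : (i : Fin p) → Fin (d i))
    (a' : Fin (d ⟨j, hj1⟩)) (b' : Fin (d ⟨j+1, hj⟩))
    (hc : (a':ℕ) + (b':ℕ) = (m ⟨j, hj1⟩ : ℕ) + (m ⟨j+1, hj⟩ : ℕ)) :
    v m * Cp q (d ⟨j, hj1⟩) (a':ℕ) (b':ℕ)
      = v (Function.update (Function.update m ⟨j, hj1⟩ a') ⟨j+1, hj⟩ b')
          * Cp q (d ⟨j, hj1⟩) ((m ⟨j, hj1⟩ : ℕ)) ((m ⟨j+1, hj⟩ : ℕ)) := by
  have hne : (⟨j+1, hj⟩ : Fin p) ≠ ⟨j, hj1⟩ := by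
    intro h
    have : j + 1 = j := congrArg Fin.val h
    omega
  let W : Submodule ℂ (VG p d) :=
    { carrier := {w | ∀ (m : (i : Fin p) → Fin (d i)) (a' : Fin (d ⟨j, hj1⟩))
        (b' : Fin (d ⟨j+1, hj⟩)),
        (a':ℕ) + (b':ℕ) = (m ⟨j, hj1⟩ : ℕ) + (m ⟨j+1, hj⟩ : ℕ) →
        w m * Cp q (d ⟨j, hj1⟩) (a':ℕ) (b':ℕ)
          = w (Function.update (Function.update m ⟨j, hj1⟩ a') ⟨j+1, hj⟩ b')
              * Cp q (d ⟨j, hj1⟩) ((m ⟨j, hj1⟩:ℕ)) ((m ⟨j+1, hj⟩:ℕ))}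
      add_mem' := by
        intro w1 w2 h1 h2 m a' b' hc
        simp only [Pi.add_apply, add_mul]
        rw [h1 m a' b' hc, h2 m a' b' hc]
      zero_mem' := by intro m a' b' hc; simp
      smul_mem' := by
        intro c w hw m a' b' hc
        simp only [Pi.smul_apply, smul_eq_mul, mul_assoc]
        rw [hw m a' b' hc] }
  have hle : TopPairCG q p d j hj ≤ W := by
    apply Submodule.span_le.mpr
    rintro w ⟨g, t, rfl⟩
    intro m a' b' hc
    show embedPair p d ⟨j, hj1⟩ ⟨j+1, hj⟩ g (thetaP q (d ⟨j, hj1⟩) (d ⟨j+1, hj⟩) t) m * _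
      = _ * _
    rw [embedPair, embedPair]
    have hupJ : (Function.update (Function.update m ⟨j, hj1⟩ a') ⟨j+1, hj⟩ b') ⟨j, hj1⟩ = a' := by
      rw [Function.update_of_ne hne.symm, Function.update_self]
    have hupJ1 : (Function.update (Function.update m ⟨j, hj1⟩ a') ⟨j+1, hj⟩ b') ⟨j+1, hj⟩ = b' := by
      rw [Function.update_self]
    have hind : (∀ i, i ≠ ⟨j, hj1⟩ → i ≠ ⟨j+1, hj⟩ →
        (Function.update (Function.update m ⟨j, hj1⟩ a') ⟨j+1, hj⟩ b') i = g i)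
        ↔ (∀ i, i ≠ ⟨j, hj1⟩ → i ≠ ⟨j+1, hj⟩ → m i = g i) := by
      constructor <;> intro h i h1 h2
      · have := h i h1 h2
        rwa [Function.update_of_ne h2, Function.update_of_ne h1] at this
      · rw [Function.update_of_ne h2, Function.update_of_ne h1]
        exact h i h1 h2
    rw [hupJ, hupJ1]
    rw [if_congr hind rfl rfl]
    rw [thetaP_eq hq, thetaP_eq hq]
    simp only
    by_cases ht : (m ⟨j, hj1⟩ : ℕ) + (m ⟨j+1, hj⟩ : ℕ) = t
    · have hc2 : (a':ℕ) + (b':ℕ) = t := by omega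
      rw [if_pos ht, if_pos hc2]
      ring
    · have hc2 : ¬((a':ℕ) + (b':ℕ) = t) := by omega
      rw [if_neg ht, if_neg hc2]
      ring
  exact (hle hv) m a' b' hc


variable {p : ℕ} {d : Fin p → ℕ}

/-- a tuple is packed if every positive entry has a full predecessor. -/
def Packed (d : Fin p → ℕ) (m : (i : Fin p) → Fin (d i)) : Prop :=
  ∀ (J J1 : Fin p), (J1:ℕ) = (J:ℕ) + 1 → 0 < (m J1:ℕ) → (m J:ℕ) = d J - 1

lemma packed_tail (hd : ∀ i, 2 ≤ d i) (m : (i : Fin p) → Fin (d i)) (hm : Packed d m)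
    (J : Fin p) (hJ : (m J:ℕ) < d J - 1) :
    ∀ (K : Fin p), (J:ℕ) < (K:ℕ) → (m K:ℕ) = 0 := by
  suffices H : ∀ k : ℕ, ∀ K : Fin p, (K:ℕ) = k → (J:ℕ) < (K:ℕ) → (m K:ℕ) = 0 by
    intro K h; exact H (K:ℕ) K rfl h
  intro k
  induction k using Nat.strong_induction_on with
  | _ k ih =>
    intro K hK hJK
    have hk1 : k - 1 < p := by have := K.isLt; omega
    set K' : Fin p := ⟨k - 1, hk1⟩ with hK'
    have hadj : (K:ℕ) = (K':ℕ) + 1 := by simp [hK']; omega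
    by_contra hpos
    have hpos' : 0 < (m K:ℕ) := by omega
    have hfull := hm K' K hadj hpos'
    by_cases hcase : k - 1 = (J:ℕ)
    · have : K' = J := by apply Fin.ext; simp [hK', hcase]
      rw [this] at hfull
      omega
    · have hlt : (J:ℕ) < (K':ℕ) := by simp [hK']; omega
      have hzero : (m K':ℕ) = 0 := ih (k-1) (by omega) K' rfl hlt
      have := hd K'
      omega

lemma packed_sum_lt (hd : ∀ i, 2 ≤ d i) (m m' : (i : Fin p) → Fin (d i))
    (hm : Packed d m) (i₀ : Fin p) (hlt : (m i₀:ℕ) < (m' i₀:ℕ))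
    (hagree : ∀ j : Fin p, (j:ℕ) < (i₀:ℕ) → (m j:ℕ) = (m' j:ℕ)) :
    ∑ i, (m i:ℕ) < ∑ i, (m' i:ℕ) := by
  have htail : ∀ K : Fin p, (i₀:ℕ) < (K:ℕ) → (m K:ℕ) = 0 := by
    apply packed_tail hd m hm
    have := (m' i₀).isLt
    omega
  have hsplit := Finset.sum_filter_add_sum_filter_not Finset.univ
    (fun j : Fin p => (j:ℕ) ≤ (i₀:ℕ)) (fun j => (m j:ℕ))
  have hsplit' := Finset.sum_filter_add_sum_filter_not Finset.univ
    (fun j : Fin p => (j:ℕ) ≤ (i₀:ℕ)) (fun j => (m' j:ℕ))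
  have hz : ∑ j ∈ Finset.univ.filter (fun j : Fin p => ¬((j:ℕ) ≤ (i₀:ℕ))), (m j:ℕ) = 0 := by
    apply Finset.sum_eq_zero
    intro j hj
    simp only [Finset.mem_filter] at hj
    exact htail j (by omega)
  have hmain : ∑ j ∈ Finset.univ.filter (fun j : Fin p => (j:ℕ) ≤ (i₀:ℕ)), (m j:ℕ)
      < ∑ j ∈ Finset.univ.filter (fun j : Fin p => (j:ℕ) ≤ (i₀:ℕ)), (m' j:ℕ) := by
    apply Finset.sum_lt_sum
    · intro j hj
      simp only [Finset.mem_filter] at hj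
      rcases Nat.lt_or_ge (j:ℕ) (i₀:ℕ) with h | h
      · exact le_of_eq (hagree j h)
      · have : j = i₀ := Fin.ext (by omega)
        rw [this]; omega
    · exact ⟨i₀, by simp, hlt⟩
  have hnn : 0 ≤ ∑ j ∈ Finset.univ.filter (fun j : Fin p => ¬((j:ℕ) ≤ (i₀:ℕ))), (m' j:ℕ) :=
    Nat.zero_le _
  omega

lemma packed_unique (hd : ∀ i, 2 ≤ d i) (m m' : (i : Fin p) → Fin (d i))
    (hm : Packed d m) (hm' : Packed d m') (hs : ∑ i, (m i:ℕ) = ∑ i, (m' i:ℕ)) :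
    m = m' := by
  by_contra h
  have hne : ∃ i, (m i:ℕ) ≠ (m' i:ℕ) := by
    by_contra hcon
    push_neg at hcon
    exact h (funext fun i => Fin.ext (hcon i))
  set F := Finset.univ.filter (fun i : Fin p => (m i:ℕ) ≠ (m' i:ℕ)) with hF
  have hFne : F.Nonempty := by
    obtain ⟨i, hi⟩ := hne
    exact ⟨i, by simp [hF, hi]⟩
  set i₀ := F.min' hFne with hi₀
  have hi₀F : i₀ ∈ F := F.min'_mem hFne
  have hdiff : (m i₀:ℕ) ≠ (m' i₀:ℕ) := by
    simpa [hF] using hi₀F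
  have hagree : ∀ j : Fin p, (j:ℕ) < (i₀:ℕ) → (m j:ℕ) = (m' j:ℕ) := by
    intro j hj
    by_contra hc
    have : i₀ ≤ j := F.min'_le j (by simp [hF, hc])
    rw [Fin.le_def] at this
    omega
  rcases Nat.lt_or_ge (m i₀:ℕ) (m' i₀:ℕ) with hlt | hge
  · exact absurd hs (Nat.ne_of_lt (packed_sum_lt hd m m' hm i₀ hlt hagree))
  · have hlt : (m' i₀:ℕ) < (m i₀:ℕ) := by omega
    exact absurd hs.symm
      (Nat.ne_of_lt (packed_sum_lt hd m' m hm' i₀ hlt (fun j hj => (hagree j hj).symm)))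

/-- ℕ-indexed capacities. -/
def DN (d : Fin p → ℕ) : ℕ → ℕ := fun j => if h : j < p then d ⟨j, h⟩ - 1 else 0

/-- greedy filling for total `r`. -/
def mgN (d : Fin p → ℕ) (r : ℕ) : ℕ → ℕ :=
  fun i => min (DN d i) (r - ∑ j ∈ Finset.range i, DN d j)

lemma mgN_partial (r : ℕ) (k : ℕ) :
    ∑ j ∈ Finset.range k, mgN d r j = min r (∑ j ∈ Finset.range k, DN d j) := by
  induction k with
  | zero => simp
  | succ k ih =>
      rw [Finset.sum_range_succ, Finset.sum_range_succ, ih, mgN]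
      omega

lemma exists_packed (hd : ∀ i, 2 ≤ d i) (r : ℕ) (hr : r ≤ ∑ i, (d i - 1)) :
    ∃ mg : (i : Fin p) → Fin (d i), (∑ i, (mg i:ℕ)) = r ∧ Packed d mg := by
  have hDN : ∀ i : Fin p, DN d (i:ℕ) = d i - 1 := by
    intro i; rw [DN, dif_pos i.isLt]
  refine ⟨fun i => ⟨mgN d r i, ?_⟩, ?_, ?_⟩
  · have h1 : mgN d r i ≤ DN d (i:ℕ) := min_le_left _ _
    have := hd i
    rw [hDN i] at h1
    omega
  · have h1 : ∑ i : Fin p, mgN d r (i:ℕ) = ∑ j ∈ Finset.range p, mgN d r j :=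
      Fin.sum_univ_eq_sum_range _ _
    have h2 : ∑ i : Fin p, (d i - 1) = ∑ j ∈ Finset.range p, DN d j := by
      rw [← Fin.sum_univ_eq_sum_range (fun j => DN d j) p]
      exact Finset.sum_congr rfl fun i _ => (hDN i).symm
    simp only
    rw [h1, mgN_partial]
    rw [h2] at hr
    omega
  · intro J J1 hadj hpos
    simp only at hpos ⊢
    rw [mgN] at hpos ⊢
    rw [hDN J]
    have h3 : ∑ j ∈ Finset.range (J1:ℕ), DN d j
        = ∑ j ∈ Finset.range (J:ℕ), DN d j + DN d (J:ℕ) := by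
      rw [hadj, Finset.sum_range_succ]
    rw [hadj] at hpos
    rw [Finset.sum_range_succ] at hpos
    rw [hDN J] at hpos
    omega


lemma Th_up (hq : NotRootOfUnity q) {p : ℕ} (d : Fin p → ℕ)
    (m : (i : Fin p) → Fin (d i)) (i : Fin p) (h : (m i : ℕ) + 1 < d i) :
    Th q d (Function.update m i ⟨(m i : ℕ) + 1, h⟩) * G q ((m i : ℕ) + 1)
      = Th q d m * q ^ (-(Nlt d i)) * G q ((∑ k, (m k : ℕ)) + 1) := by
  have hq0 : q ≠ 0 := hq.1
  have hS : (∑ k, ((Function.update m i ⟨(m i : ℕ) + 1, h⟩ k : ℕ)))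
      = (∑ k, (m k : ℕ)) + 1 := by
    have := sum_update_one (fun k (x : Fin (d k)) => (x : ℕ)) m i ⟨(m i : ℕ) + 1, h⟩
    simp only at this
    omega
  have hA := prod_update_one (fun k (x : Fin (d k)) => q ^ (-((x:ℕ):ℤ) * Nlt d k))
    m i ⟨(m i : ℕ) + 1, h⟩
  simp only at hA
  have hQ := prod_update_one (fun k (x : Fin (d k)) => Qf q (x : ℕ)) m i ⟨(m i : ℕ) + 1, h⟩
  simp only at hQ
  have hA' : (∏ k, q ^ (-((Function.update m i ⟨(m i : ℕ) + 1, h⟩ k : ℕ) : ℤ) * Nlt d k))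
      = (∏ k, q ^ (-((m k : ℕ) : ℤ) * Nlt d k)) * q ^ (-(Nlt d i)) := by
    apply mul_right_cancel₀ (zpow_ne_zero (-((m i : ℕ) : ℤ) * Nlt d i) hq0)
    rw [hA, mul_assoc, ← zpow_add₀ hq0]
    congr 1
    push_cast
    ring
  have hQ' : (∏ k, Qf q ((Function.update m i ⟨(m i : ℕ) + 1, h⟩ k : ℕ)))
      = (∏ k, Qf q (m k : ℕ)) * G q ((m i : ℕ) + 1) := by
    apply mul_right_cancel₀ (Qf_ne_zero hq (m i : ℕ))
    rw [hQ, Qf_succ]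
    ring
  rw [Th, Th, hS, hA', hQ', Qf_succ]
  have hGne := G_ne_zero hq (n := (m i : ℕ) + 1) (by omega)
  have hGne2 : G q (1 + (m i : ℕ)) ≠ 0 := by rwa [add_comm]
  have hQfne : (∏ k, Qf q (m k : ℕ)) ≠ 0 :=
    Finset.prod_ne_zero_iff.mpr fun k _ => Qf_ne_zero hq _
  field_simp [hGne2]

lemma term_eq (hq : NotRootOfUnity q) {p : ℕ} (d : Fin p → ℕ) (hd : ∀ i, 2 ≤ d i)
    (m₀ : (i : Fin p) → Fin (d i)) (i : Fin p) :
    (∏ j, if i < j then q ^ (((d j : ℤ) - 1) - 2 * ((m₀ j : ℕ) : ℤ)) else 1) *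
      qint q (((m₀ i : ℕ) : ℤ) + 1) * qint q (((d i : ℤ) - 1) - ((m₀ i : ℕ) : ℤ)) *
      (if h : (m₀ i : ℕ) + 1 < d i then
        Th q d (Function.update m₀ i ⟨(m₀ i : ℕ) + 1, h⟩) else 0)
    = Th q d m₀ * G q ((∑ k, (m₀ k : ℕ)) + 1) * (q^2 - 1)⁻¹ * q *
        (q ^ (CC p d m₀ (i:ℕ)) - q ^ (CC p d m₀ ((i:ℕ) + 1))) := by
  have hq0 : q ≠ 0 := hq.1
  have hmi := (m₀ i).isLt
  have hdi := hd i
  by_cases hbound : (m₀ i : ℕ) + 1 < d i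
  · rw [dif_pos hbound]
    -- the K-tail coefficient
    have hP : (∏ j, if i < j then q ^ (((d j : ℤ) - 1) - 2 * ((m₀ j : ℕ) : ℤ)) else 1)
        = q ^ ((∑ j ∈ Finset.range p, wN p d m₀ j) -
            ∑ j ∈ Finset.range ((i:ℕ)+1), wN p d m₀ j) := by
      have h1 : (∏ j, if i < j then q ^ (((d j : ℤ) - 1) - 2 * ((m₀ j : ℕ) : ℤ)) else 1)
          = ∏ j : Fin p, q ^ (if (i:ℕ) < (j:ℕ) then wN p d m₀ (j:ℕ) else 0) := by
        refine Finset.prod_congr rfl fun j _ => ?_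
        by_cases hij : (i:ℕ) < (j:ℕ)
        · rw [if_pos (by rwa [Fin.lt_def]), if_pos hij, wN_at]
        · rw [if_neg (by rwa [Fin.lt_def]), if_neg hij, zpow_zero]
      rw [h1, prod_zpow_sum hq0]
      congr 1
      have h2 : ∑ j : Fin p, (if (i:ℕ) < (j:ℕ) then wN p d m₀ (j:ℕ) else 0)
          = ∑ k ∈ Finset.range p, (if (i:ℕ) < k then wN p d m₀ k else 0) :=
        Fin.sum_univ_eq_sum_range (fun k => if (i:ℕ) < k then wN p d m₀ k else 0) p
      rw [h2]
      have h3 : ∀ k, (if (i:ℕ) < k then wN p d m₀ k else 0)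
          = wN p d m₀ k - (if k < (i:ℕ)+1 then wN p d m₀ k else 0) := by
        intro k
        by_cases hk : (i:ℕ) < k
        · rw [if_pos hk, if_neg (by omega), sub_zero]
        · rw [if_neg hk, if_pos (by omega), sub_self]
      rw [Finset.sum_congr rfl fun k _ => h3 k, Finset.sum_sub_distrib,
        sum_ite_range ((i:ℕ)+1) p (by omega) (wN p d m₀)]
    have hq1 : qint q (((m₀ i : ℕ) : ℤ) + 1)
        = q ^ (-((m₀ i : ℕ) : ℤ)) * G q ((m₀ i : ℕ) + 1) := by
      rw [show (((m₀ i : ℕ) : ℤ) + 1) = (((m₀ i : ℕ) + 1 : ℕ) : ℤ) by push_cast; ring,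
        qint_nat hq]
      congr 1
      push_cast
      ring
    have hq2 : qint q (((d i : ℤ) - 1) - ((m₀ i : ℕ) : ℤ))
        = q ^ (2 + ((m₀ i : ℕ) : ℤ) - (d i : ℤ)) * G q (d i - 1 - (m₀ i : ℕ)) := by
      rw [show (((d i : ℤ) - 1) - ((m₀ i : ℕ) : ℤ)) = ((d i - 1 - (m₀ i : ℕ) : ℕ) : ℤ)
        by omega, qint_nat hq,
        show ((1 : ℤ) - ((d i - 1 - (m₀ i : ℕ) : ℕ) : ℤ)) = 2 + ((m₀ i : ℕ) : ℤ) - (d i : ℤ)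
        by omega]
    have hup := Th_up hq d m₀ i hbound
    have hGd := G_mul hq (d i - 1 - (m₀ i : ℕ))
    apply mul_right_cancel₀ (sq_sub_one_ne hq)
    have hinv : (q^2 - 1)⁻¹ * (q^2 - 1) = 1 := inv_mul_cancel₀ (sq_sub_one_ne hq)
    rw [hP, hq1, hq2]
    -- exponent bookkeeping
    set S := ∑ k, (m₀ k : ℕ) with hSdef
    set N := Nlt d i with hNdef
    set PE := (∑ j ∈ Finset.range p, wN p d m₀ j) - ∑ j ∈ Finset.range ((i:ℕ)+1), wN p d m₀ j
      with hPEdef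
    set X2 := PE - (d i : ℤ) + 2 - N with hX2def
    have e1 : X2 = CC p d m₀ ((i:ℕ)+1) + 1 := by
      rw [hX2def, hPEdef, CC, Finset.sum_add_distrib, hNdef, Nlt,
        Finset.sum_range_succ (eN p d) (i:ℕ), eN_at]
      ring
    have e2 : X2 + ((2 * (d i - 1 - (m₀ i : ℕ)) : ℕ) : ℤ) = CC p d m₀ (i:ℕ) + 1 := by
      have e3 : CC p d m₀ (i:ℕ) = CC p d m₀ ((i:ℕ)+1) + (wN p d m₀ (i:ℕ) + eN p d (i:ℕ)) := by
        rw [CC, CC, Finset.sum_range_succ]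
        ring
      rw [e3, wN_at, eN_at]
      omega
    have hmerge : q ^ PE * q ^ (-((m₀ i : ℕ) : ℤ)) * q ^ (2 + ((m₀ i : ℕ) : ℤ) - (d i : ℤ)) *
        q ^ (-N) = q ^ X2 := by
      rw [← zpow_add₀ hq0, ← zpow_add₀ hq0, ← zpow_add₀ hq0]
      congr 1
      rw [hX2def]
      ring
    calc q ^ PE * (q ^ (-((m₀ i : ℕ) : ℤ)) * G q ((m₀ i : ℕ) + 1)) *
          (q ^ (2 + ((m₀ i : ℕ) : ℤ) - (d i : ℤ)) * G q (d i - 1 - (m₀ i : ℕ))) *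
          Th q d (Function.update m₀ i ⟨(m₀ i : ℕ) + 1, hbound⟩) * (q^2 - 1)
        = (q ^ PE * q ^ (-((m₀ i : ℕ) : ℤ)) * q ^ (2 + ((m₀ i : ℕ) : ℤ) - (d i : ℤ))) *
            (G q (d i - 1 - (m₀ i : ℕ)) * (q^2 - 1)) *
            (Th q d (Function.update m₀ i ⟨(m₀ i : ℕ) + 1, hbound⟩) * G q ((m₀ i : ℕ) + 1)) := by
          ring
      _ = (q ^ PE * q ^ (-((m₀ i : ℕ) : ℤ)) * q ^ (2 + ((m₀ i : ℕ) : ℤ) - (d i : ℤ))) *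
            (q ^ (2 * (d i - 1 - (m₀ i : ℕ))) - 1) *
            (Th q d m₀ * q ^ (-N) * G q (S + 1)) := by
          rw [hGd, hup]
      _ = (q ^ PE * q ^ (-((m₀ i : ℕ) : ℤ)) * q ^ (2 + ((m₀ i : ℕ) : ℤ) - (d i : ℤ)) * q ^ (-N)) *
            (q ^ (2 * (d i - 1 - (m₀ i : ℕ))) - 1) * (Th q d m₀ * G q (S + 1)) := by
          ring
      _ = Th q d m₀ * G q (S + 1) *
            (q ^ X2 * q ^ ((2 * (d i - 1 - (m₀ i : ℕ)) : ℕ) : ℤ) - q ^ X2) := by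
          rw [hmerge, ← zpow_natCast q (2 * (d i - 1 - (m₀ i : ℕ)))]
          ring
      _ = Th q d m₀ * G q (S + 1) *
            (q ^ (CC p d m₀ (i:ℕ) + 1) - q ^ (CC p d m₀ ((i:ℕ)+1) + 1)) := by
          rw [← zpow_add₀ hq0, e2, ← e1]
      _ = Th q d m₀ * G q (S + 1) * (q^2 - 1)⁻¹ * q *
            (q ^ (CC p d m₀ (i:ℕ)) - q ^ (CC p d m₀ ((i:ℕ)+1))) * (q^2 - 1) := by
          rw [zpow_add₀ hq0 (CC p d m₀ (i:ℕ)) 1, zpow_add₀ hq0 (CC p d m₀ ((i:ℕ)+1)) 1,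
            zpow_one]
          linear_combination (-(Th q d m₀ * G q (S+1) * q *
            (q ^ (CC p d m₀ (i:ℕ)) - q ^ (CC p d m₀ ((i:ℕ)+1))))) * hinv
  · rw [dif_neg hbound, mul_zero]
    have hmieq : (m₀ i : ℕ) = d i - 1 := by omega
    have hCeq : CC p d m₀ (i:ℕ) = CC p d m₀ ((i:ℕ)+1) := by
      rw [CC, CC, Finset.sum_range_succ, wN_at, eN_at]
      have : ((m₀ i : ℕ) : ℤ) = (d i : ℤ) - 1 := by omega
      rw [this]
      ring
    rw [hCeq, sub_self, mul_zero]

end HW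

/-- If `n = ∑ᵢ sᵢ > s ≥ 0` with `s ≡ n (mod 2)` and `v ∈ M_{d_p} ⊗ ⋯ ⊗ M_{d_1}`
satisfies `E.v = 0`, `K.v = q^s v`, and all generalized projections
`π̃_j^(δ)(v) = 0` for every adjacent pair `j` and every `m ∈ {1,…,min(s_j,s_{j+1})}`
(equivalently, `v` lies in the top Clebsch–Gordan summand of every adjacent pair),
then `v = 0`. -/
theorem highest_weight_vector_in_all_top_pairs_is_zero
    (q : ℂ) (hq : NotRootOfUnity q) (p : ℕ) (d : Fin p → ℕ) (hd : ∀ i, 2 ≤ d i)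
    (s : ℕ) (hns : s < ∑ i, (d i - 1)) (hpar : (∑ i, (d i - 1)) % 2 = s % 2)
    (v : VG p d)
    (hE : EactG q p d v = 0)
    (hK : KactG q p d v = fun m => q ^ (s : ℤ) * v m)
    (htop : ∀ (j : ℕ) (hj : j + 1 < p), v ∈ TopPairCG q p d j hj) :
    v = 0 := by
  classical
  have hq0 : q ≠ 0 := hq.1
  set n : ℕ := ∑ i, (d i - 1) with hn
  set r : ℕ := (n - s) / 2 with hrdef
  have hr2 : 2 * r + s = n := by omega
  have hr1 : 1 ≤ r := by omega
  have hrn : r ≤ n := by omega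
  have hnZ : ∑ i : Fin p, ((d i : ℤ) - 1) = (n : ℤ) := by
    rw [hn]
    push_cast
    refine Finset.sum_congr rfl fun i _ => ?_
    have := hd i
    omega
  -- step 1 : weight support
  have hsupp : ∀ m : (i : Fin p) → Fin (d i), (∑ i, (m i : ℕ)) ≠ r → v m = 0 := by
    intro m hm
    by_contra hvm
    have hk := congrFun hK m
    simp only [KactG] at hk
    have hprod := mul_right_cancel₀ hvm hk
    rw [HW.prod_zpow_sum hq0] at hprod
    have hWval : (∑ j : Fin p, (((d j : ℤ) - 1) - 2 * ((m j : ℕ) : ℤ)))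
        = (n : ℤ) - 2 * (((∑ i, (m i : ℕ)) : ℕ) : ℤ) := by
      rw [Finset.sum_sub_distrib, hnZ, ← Finset.mul_sum, ← Nat.cast_sum]
    have hWs : (∑ j : Fin p, (((d j : ℤ) - 1) - 2 * ((m j : ℕ) : ℤ))) = (s : ℤ) := by
      by_contra hne
      refine hq.2 ((∑ j : Fin p, (((d j : ℤ) - 1) - 2 * ((m j : ℕ) : ℤ))) - s)
        (sub_ne_zero.mpr hne) ?_
      rw [zpow_sub₀ hq0, hprod, div_self (zpow_ne_zero _ hq0)]
    rw [hWval] at hWs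
    omega
  -- the packed reference point
  obtain ⟨mg, hmgs, hmgp⟩ := HW.exists_packed hd r (by rw [← hn]; omega)
  -- step 2 : exchange along adjacent pairs towards the packed point
  have main : ∀ φ : ℕ, ∀ m : (i : Fin p) → Fin (d i), (∑ i, (m i : ℕ)) = r →
      (∑ i : Fin p, ((i : ℕ) * (m i : ℕ))) ≤ φ → v m * HW.Th q d mg = v mg * HW.Th q d m := by
    intro φ
    induction φ using Nat.strong_induction_on with
    | _ φ ih =>
      intro m hsum hφ
      by_cases hp : HW.Packed d m
      · rw [HW.packed_unique hd m mg hp hmgp (by rw [hsum, hmgs])]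
      · rw [HW.Packed] at hp
        push_neg at hp
        obtain ⟨J, J1, hadj, hpos, hnf⟩ := hp
        obtain ⟨jv, hjv⟩ := J
        obtain ⟨j1v, hj1v⟩ := J1
        simp only [Fin.val_mk] at hadj hpos hnf
        subst hadj
        have hmJlt := (m ⟨jv, hjv⟩).isLt
        have hmJ1lt := (m ⟨jv + 1, hj1v⟩).isLt
        have hdJ := hd ⟨jv, hjv⟩
        have hane : (m ⟨jv, hjv⟩ : ℕ) + 1 < d ⟨jv, hjv⟩ := by omega
        have hbne : (m ⟨jv + 1, hj1v⟩ : ℕ) - 1 < d ⟨jv + 1, hj1v⟩ := by omega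
        have hc : ((⟨(m ⟨jv, hjv⟩ : ℕ) + 1, hane⟩ : Fin (d ⟨jv, hjv⟩)) : ℕ)
            + ((⟨(m ⟨jv + 1, hj1v⟩ : ℕ) - 1, hbne⟩ : Fin (d ⟨jv + 1, hj1v⟩)) : ℕ)
            = (m ⟨jv, hjv⟩ : ℕ) + (m ⟨jv + 1, hj1v⟩ : ℕ) := by
          simp only [Fin.val_mk]
          omega
        have R1 := HW.top_rel hq d v jv hj1v hjv (htop jv hj1v) m
          ⟨(m ⟨jv, hjv⟩ : ℕ) + 1, hane⟩ ⟨(m ⟨jv + 1, hj1v⟩ : ℕ) - 1, hbne⟩ hc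
        have R2 := HW.Th_pair hq d ⟨jv, hjv⟩ ⟨jv + 1, hj1v⟩ rfl m
          ⟨(m ⟨jv, hjv⟩ : ℕ) + 1, hane⟩ ⟨(m ⟨jv + 1, hj1v⟩ : ℕ) - 1, hbne⟩ hc
        have hCpne := HW.Cp_ne_zero hq (d ⟨jv, hjv⟩)
          ((⟨(m ⟨jv, hjv⟩ : ℕ) + 1, hane⟩ : Fin (d ⟨jv, hjv⟩)) : ℕ)
          ((⟨(m ⟨jv + 1, hj1v⟩ : ℕ) - 1, hbne⟩ : Fin (d ⟨jv + 1, hj1v⟩)) : ℕ)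
        have hne : (⟨jv + 1, hj1v⟩ : Fin p) ≠ ⟨jv, hjv⟩ := by
          intro h
          have := congrArg Fin.val h
          simp only [Fin.val_mk] at this
          omega
        have R3 : v m * HW.Th q d (Function.update (Function.update m ⟨jv, hjv⟩
              ⟨(m ⟨jv, hjv⟩ : ℕ) + 1, hane⟩) ⟨jv + 1, hj1v⟩ ⟨(m ⟨jv + 1, hj1v⟩ : ℕ) - 1, hbne⟩)
            = v (Function.update (Function.update m ⟨jv, hjv⟩
              ⟨(m ⟨jv, hjv⟩ : ℕ) + 1, hane⟩) ⟨jv + 1, hj1v⟩ ⟨(m ⟨jv + 1, hj1v⟩ : ℕ) - 1, hbne⟩)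
              * HW.Th q d m := by
          apply mul_right_cancel₀ hCpne
          linear_combination (HW.Th q d (Function.update (Function.update m ⟨jv, hjv⟩
              ⟨(m ⟨jv, hjv⟩ : ℕ) + 1, hane⟩) ⟨jv + 1, hj1v⟩
              ⟨(m ⟨jv + 1, hj1v⟩ : ℕ) - 1, hbne⟩)) * R1
            - (v (Function.update (Function.update m ⟨jv, hjv⟩
              ⟨(m ⟨jv, hjv⟩ : ℕ) + 1, hane⟩) ⟨jv + 1, hj1v⟩
              ⟨(m ⟨jv + 1, hj1v⟩ : ℕ) - 1, hbne⟩)) * R2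
        have hsum' : (∑ i, ((Function.update (Function.update m ⟨jv, hjv⟩
              ⟨(m ⟨jv, hjv⟩ : ℕ) + 1, hane⟩) ⟨jv + 1, hj1v⟩
              ⟨(m ⟨jv + 1, hj1v⟩ : ℕ) - 1, hbne⟩ i : ℕ))) = r := by
          have := HW.sum_update_pair (fun i (x : Fin (d i)) => (x : ℕ)) m
            ⟨jv, hjv⟩ ⟨jv + 1, hj1v⟩ hne
            ⟨(m ⟨jv, hjv⟩ : ℕ) + 1, hane⟩ ⟨(m ⟨jv + 1, hj1v⟩ : ℕ) - 1, hbne⟩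
          simp only [Fin.val_mk] at this
          omega
        have hφ1 : 1 ≤ ∑ i : Fin p, ((i : ℕ) * (m i : ℕ)) := by
          have h1 : (jv + 1) * (m ⟨jv + 1, hj1v⟩ : ℕ)
              ≤ ∑ i : Fin p, ((i : ℕ) * (m i : ℕ)) := by
            have := Finset.single_le_sum (f := fun i : Fin p => (i : ℕ) * (m i : ℕ))
              (fun i _ => Nat.zero_le _) (Finset.mem_univ ⟨jv + 1, hj1v⟩)
            simpa using this
          have : 1 ≤ (jv + 1) * (m ⟨jv + 1, hj1v⟩ : ℕ) :=
            Nat.one_le_iff_ne_zero.mpr (Nat.mul_ne_zero (by omega) (by omega))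
          omega
        have hφ' : (∑ i : Fin p, ((i : ℕ) * ((Function.update (Function.update m ⟨jv, hjv⟩
              ⟨(m ⟨jv, hjv⟩ : ℕ) + 1, hane⟩) ⟨jv + 1, hj1v⟩
              ⟨(m ⟨jv + 1, hj1v⟩ : ℕ) - 1, hbne⟩ i : ℕ)))) + 1
            = ∑ i : Fin p, ((i : ℕ) * (m i : ℕ)) := by
          have hthis := HW.sum_update_pair (fun i (x : Fin (d i)) => (i : ℕ) * (x : ℕ)) m
            ⟨jv, hjv⟩ ⟨jv + 1, hj1v⟩ hne
            ⟨(m ⟨jv, hjv⟩ : ℕ) + 1, hane⟩ ⟨(m ⟨jv + 1, hj1v⟩ : ℕ) - 1, hbne⟩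
          simp only [Fin.val_mk] at hthis
          have e1 : jv * ((m ⟨jv, hjv⟩ : ℕ) + 1) = jv * (m ⟨jv, hjv⟩ : ℕ) + jv := by ring
          have hM : ((m ⟨jv + 1, hj1v⟩ : ℕ) - 1) + 1 = (m ⟨jv + 1, hj1v⟩ : ℕ) := by omega
          have e2 : (jv + 1) * ((m ⟨jv + 1, hj1v⟩ : ℕ) - 1) + (jv + 1)
              = (jv + 1) * (m ⟨jv + 1, hj1v⟩ : ℕ) := by
            calc (jv + 1) * ((m ⟨jv + 1, hj1v⟩ : ℕ) - 1) + (jv + 1)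
                = (jv + 1) * (((m ⟨jv + 1, hj1v⟩ : ℕ) - 1) + 1) := by ring
              _ = _ := by rw [hM]
          omega
        have IH2 := ih (φ - 1) (by omega) _ hsum' (by omega)
        apply mul_right_cancel₀ (HW.Th_ne_zero hq d (Function.update (Function.update m ⟨jv, hjv⟩
              ⟨(m ⟨jv, hjv⟩ : ℕ) + 1, hane⟩) ⟨jv + 1, hj1v⟩
              ⟨(m ⟨jv + 1, hj1v⟩ : ℕ) - 1, hbne⟩))
        linear_combination (HW.Th q d mg) * R3 + (HW.Th q d m) * IH2
  have hprop : ∀ m : (i : Fin p) → Fin (d i), (∑ i, (m i : ℕ)) = r →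
      v m * HW.Th q d mg = v mg * HW.Th q d m :=
    fun m hm => main (∑ i : Fin p, ((i : ℕ) * (m i : ℕ))) m hm le_rfl
  -- step 3 : highest-weight telescoping at a point of weight r-1
  obtain ⟨m₀, hm₀s, -⟩ := HW.exists_packed hd (r - 1) (by rw [← hn]; omega)
  have hEm := congrFun hE m₀
  simp only [EactG, Pi.zero_apply] at hEm
  have hterm : ∀ i : Fin p,
      ((∏ j, if i < j then q ^ (((d j : ℤ) - 1) - 2 * ((m₀ j : ℕ) : ℤ)) else 1) *
        qint q (((m₀ i : ℕ) : ℤ) + 1) * qint q (((d i : ℤ) - 1) - ((m₀ i : ℕ) : ℤ)) *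
        (if h : (m₀ i : ℕ) + 1 < d i then v (Function.update m₀ i ⟨(m₀ i : ℕ) + 1, h⟩) else 0))
        * HW.Th q d mg
      = v mg * (HW.Th q d m₀ * HW.G q ((∑ k, (m₀ k : ℕ)) + 1) * (q ^ 2 - 1)⁻¹ * q *
          (q ^ (HW.CC p d m₀ (i : ℕ)) - q ^ (HW.CC p d m₀ ((i : ℕ) + 1)))) := by
    intro i
    rw [← HW.term_eq hq d hd m₀ i]
    by_cases h : (m₀ i : ℕ) + 1 < d i
    · rw [dif_pos h, dif_pos h]
      have hsr : (∑ k, ((Function.update m₀ i ⟨(m₀ i : ℕ) + 1, h⟩ k : ℕ))) = r := by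
        have := HW.sum_update_one (fun k (x : Fin (d k)) => (x : ℕ)) m₀ i ⟨(m₀ i : ℕ) + 1, h⟩
        simp only [Fin.val_mk] at this
        omega
      have hpr := hprop _ hsr
      linear_combination ((∏ j, if i < j then q ^ (((d j : ℤ) - 1) - 2 * ((m₀ j : ℕ) : ℤ)) else 1) *
        qint q (((m₀ i : ℕ) : ℤ) + 1) * qint q (((d i : ℤ) - 1) - ((m₀ i : ℕ) : ℤ))) * hpr
    · rw [dif_neg h, dif_neg h]
      ring
  have key := congrArg (· * HW.Th q d mg) hEm
  simp only [zero_mul] at key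
  rw [Finset.sum_mul] at key
  rw [Finset.sum_congr rfl (fun i _ => hterm i), ← Finset.mul_sum] at key
  -- evaluate the telescoping sum
  have hwsum : ∑ j ∈ Finset.range p, HW.wN p d m₀ j = (n : ℤ) - 2 * ((r : ℤ) - 1) := by
    rw [← Fin.sum_univ_eq_sum_range (HW.wN p d m₀) p,
      Finset.sum_congr rfl (fun i _ => HW.wN_at d m₀ i), Finset.sum_sub_distrib, hnZ,
      ← Finset.mul_sum, ← Nat.cast_sum, hm₀s]
    have : ((r - 1 : ℕ) : ℤ) = (r : ℤ) - 1 := by omega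
    rw [this]
  have hesum : ∑ j ∈ Finset.range p, HW.eN p d j = (n : ℤ) := by
    rw [← Fin.sum_univ_eq_sum_range (HW.eN p d) p,
      Finset.sum_congr rfl (fun i _ => HW.eN_at d i), hnZ]
  have hC0 : HW.CC p d m₀ 0 = (n : ℤ) - 2 * ((r : ℤ) - 1) := by
    rw [HW.CC]
    simp [hwsum]
  have hCp : HW.CC p d m₀ p = -(n : ℤ) := by
    rw [HW.CC, Finset.sum_add_distrib, hesum]
    ring
  have htel : (∑ i : Fin p, (q ^ (HW.CC p d m₀ (i : ℕ)) - q ^ (HW.CC p d m₀ ((i : ℕ) + 1))))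
      = q ^ ((n : ℤ) - 2 * ((r : ℤ) - 1)) - q ^ (-(n : ℤ)) := by
    rw [Fin.sum_univ_eq_sum_range
      (fun k => q ^ (HW.CC p d m₀ k) - q ^ (HW.CC p d m₀ (k + 1))) p,
      Finset.sum_range_sub' (fun k => q ^ (HW.CC p d m₀ k)) p, hC0, hCp]
  have hdiff_ne : q ^ ((n : ℤ) - 2 * ((r : ℤ) - 1)) - q ^ (-(n : ℤ)) ≠ 0 := by
    intro h
    have h1 := sub_eq_zero.mp h
    refine hq.2 (((n : ℤ) - 2 * ((r : ℤ) - 1)) - (-(n : ℤ))) (by omega) ?_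
    rw [zpow_sub₀ hq0, h1, div_self (zpow_ne_zero _ hq0)]
  have hsum1 : (∑ k, (m₀ k : ℕ)) + 1 = r := by omega
  have hvmg : v mg = 0 := by
    rw [← Finset.mul_sum, htel, hsum1] at key
    rcases mul_eq_zero.mp key with h | h
    · exact h
    · exfalso
      rcases mul_eq_zero.mp h with h2 | h2
      · rcases mul_eq_zero.mp h2 with h3 | h3
        · rcases mul_eq_zero.mp h3 with h4 | h4
          · rcases mul_eq_zero.mp h4 with h5 | h5
            · exact HW.Th_ne_zero hq d m₀ h5
            · exact HW.G_ne_zero hq (by omega) h5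
          · exact inv_ne_zero (HW.sq_sub_one_ne hq) h4
        · exact hq0 h3
      · exact hdiff_ne h2
  funext m
  show v m = 0
  by_cases hs : (∑ i, (m i : ℕ)) = r
  · have hpr := hprop m hs
    rw [hvmg, zero_mul] at hpr
    rcases mul_eq_zero.mp hpr with h | h
    · exact h
    · exact absurd h (HW.Th_ne_zero hq d mg)
  · exact hsupp m hs
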